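/- Let X₁ be a real random variable Gaussian with mean μ₁ and variance σ₁² (σ₁ > 0), let ρ ∈ [−1, 1], σ₂ ≥ 0, μ₂ ∈ ℝ, and let W be independent of X₁ and Gaussian with mean 0 and variance (1 − ρ²)σ₂² > 0. Define X₂ := μ₂ + ρ·(σ₂/σ₁)·(X₁ − μ₁) + W, so that (X₁, X₂) is a bivariate Gaussian vector with correlation ρ. Then for all β₀, β₁, β₂ ∈ ℝ, almost surely, the conditional expectation of Φ(β₀ + β₁X₁ + β₂X₂) given the σ-algebra generated by X₁ equals Φ((α₀ + α₁X₁)/√(1 + β₂²(1 − ρ²)σ₂²)), where α₀ = β₀ + β₂μ₂ − β₂ρ(σ₂/σ₁)μ₁ and α₁ = β₁ + β₂ρσ₂/σ₁. -/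

import Mathlib

open MeasureTheory ProbabilityTheory Real
open scoped NNReal
open scoped ENNReal

/-- The standard normal CDF `Φ(t) = (2π)^{-1/2} ∫_{-∞}^t e^{-s²/2} ds`. -/
noncomputable def stdNormalCDF (t : ℝ) : ℝ :=
  ∫ s in Set.Iic t, Real.exp (-s ^ 2 / 2) / Real.sqrt (2 * Real.pi)

lemma stdNormalCDF_eq_integral_pdf (t : ℝ) :
    stdNormalCDF t = ∫ s in Set.Iic t, gaussianPDFReal 0 1 s := by
  unfold stdNormalCDF
  congr 1 with s
  rw [gaussianPDFReal]
  push_cast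
  rw [mul_one, sub_zero]
  ring

lemma stdNormalCDF_eq_toReal (t : ℝ) :
    stdNormalCDF t = ((gaussianReal 0 1) (Set.Iic t)).toReal := by
  rw [stdNormalCDF_eq_integral_pdf, gaussianReal_apply_eq_integral 0 one_ne_zero,
    ENNReal.toReal_ofReal]
  exact setIntegral_nonneg measurableSet_Iic fun x _ => gaussianPDFReal_nonneg _ _ _

lemma stdNormalCDF_mono : Monotone stdNormalCDF := by
  intro s t hst
  simp only [stdNormalCDF_eq_toReal]
  exact ENNReal.toReal_mono (measure_ne_top _ _) (measure_mono (Set.Iic_subset_Iic.2 hst))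

lemma measurable_stdNormalCDF : Measurable stdNormalCDF := stdNormalCDF_mono.measurable

lemma stdNormalCDF_nonneg (t : ℝ) : 0 ≤ stdNormalCDF t := by
  rw [stdNormalCDF_eq_toReal]; positivity

lemma stdNormalCDF_le_one (t : ℝ) : stdNormalCDF t ≤ 1 := by
  rw [stdNormalCDF_eq_toReal]
  exact ENNReal.toReal_le_of_le_ofReal one_pos.le (by simpa using prob_le_one)

lemma gauss_prod_aux (a b t x : ℝ) (ha : 0 < a) (hb : 0 < b) :
    (Real.sqrt (2*π*a))⁻¹ * rexp (-(t+x)^2/(2*a)) * ((Real.sqrt (2*π*b))⁻¹ * rexp (-x^2/(2*b)))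
    = (Real.sqrt (2*π*(a+b)))⁻¹ * rexp (-t^2/(2*(a+b))) *
      ((Real.sqrt (2*π*(a*b/(a+b))))⁻¹ * rexp (-(x+t*b/(a+b))^2/(2*(a*b/(a+b))))) := by
  have hab : 0 < a + b := by linarith
  have hπ : 0 < π := Real.pi_pos
  have hexp : -(t+x)^2/(2*a) + -x^2/(2*b)
      = -t^2/(2*(a+b)) + -(x+t*b/(a+b))^2/(2*(a*b/(a+b))) := by
    field_simp
    ring
  have hconst : Real.sqrt (2*π*a) * Real.sqrt (2*π*b)
      = Real.sqrt (2*π*(a+b)) * Real.sqrt (2*π*(a*b/(a+b))) := by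
    rw [← Real.sqrt_mul (by positivity), ← Real.sqrt_mul (by positivity)]
    congr 1
    field_simp
  rw [mul_mul_mul_comm, ← mul_inv, ← Real.exp_add, hconst, hexp, Real.exp_add, mul_inv,
    mul_mul_mul_comm]

lemma lintegral_gaussianPDF_conv (v₁ v₂ : ℝ≥0) (hv₁ : v₁ ≠ 0) (hv₂ : v₂ ≠ 0) (t : ℝ) :
    ∫⁻ x, gaussianPDF 0 v₁ (t + x) * gaussianPDF 0 v₂ x = gaussianPDF 0 (v₁ + v₂) t := by
  have ha : 0 < (v₁ : ℝ) := by exact_mod_cast pos_iff_ne_zero.2 hv₁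
  have hb : 0 < (v₂ : ℝ) := by exact_mod_cast pos_iff_ne_zero.2 hv₂
  set c : ℝ≥0 := v₁ * v₂ / (v₁ + v₂) with hc
  have hcr : (c : ℝ) = (v₁ : ℝ) * v₂ / ((v₁ : ℝ) + v₂) := by push_cast [hc]; ring
  have hcne : c ≠ 0 := by
    intro h
    rw [h] at hcr
    have : (0:ℝ) < (v₁ : ℝ) * v₂ / ((v₁ : ℝ) + v₂) := by positivity
    simp at hcr
    linarith [hcr ▸ this]
  have hpt : ∀ x, gaussianPDF 0 v₁ (t + x) * gaussianPDF 0 v₂ x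
      = gaussianPDF 0 (v₁ + v₂) t * gaussianPDF (-(t * v₂ / ((v₁ : ℝ) + v₂))) c x := by
    intro x
    rw [gaussianPDF, gaussianPDF, gaussianPDF, gaussianPDF,
      ← ENNReal.ofReal_mul (gaussianPDFReal_nonneg _ _ _),
      ← ENNReal.ofReal_mul (gaussianPDFReal_nonneg _ _ _)]
    congr 1
    unfold gaussianPDFReal
    have h := gauss_prod_aux (v₁ : ℝ) (v₂ : ℝ) t x ha hb
    push_cast
    simpa [sub_zero, sub_neg_eq_add, hcr] using h
  simp_rw [hpt]
  rw [lintegral_const_mul _ (measurable_gaussianPDF _ _), lintegral_gaussianPDF_eq_one _ hcne,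
    mul_one]

lemma gaussianReal_Iic_scale (v : ℝ≥0) (a : ℝ) :
    gaussianReal 0 (1 + v) (Set.Iic a)
      = gaussianReal 0 1 (Set.Iic (a / Real.sqrt (1 + (v : ℝ)))) := by
  have hc : (0:ℝ) < Real.sqrt (1 + (v : ℝ)) := Real.sqrt_pos.2 (by positivity)
  have hmap := gaussianReal_map_const_mul (μ := 0) (v := 1) (Real.sqrt (1 + (v : ℝ)))
  have hmap' : (gaussianReal 0 1).map (fun x => Real.sqrt (1 + (v : ℝ)) * x)
      = gaussianReal 0 (1 + v) := by
    rw [hmap]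
    congr 1
    · ring
    · rw [mul_one]
      apply NNReal.coe_inj.mp
      push_cast
      rw [Real.sq_sqrt (by positivity)]
  rw [← hmap', Measure.map_apply (measurable_const_mul _) measurableSet_Iic]
  congr 1
  ext x
  simp only [Set.mem_preimage, Set.mem_Iic]
  rw [mul_comm, ← le_div_iff₀ hc]

lemma integral_stdNormalCDF_gaussian (v : ℝ≥0) (a : ℝ) :
    ∫ w, stdNormalCDF (a + w) ∂(gaussianReal 0 v)
      = stdNormalCDF (a / Real.sqrt (1 + (v : ℝ))) := by
  by_cases hv : v = 0
  · subst hv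
    simp only [gaussianReal_zero_var, integral_dirac, add_zero, NNReal.coe_zero]
    norm_num
  · have hmono : Monotone fun w => (gaussianReal 0 1) (Set.Iic (a + w)) := fun w w' hw =>
      measure_mono (Set.Iic_subset_Iic.2 (by linarith))
    have h1 : ∫ w, stdNormalCDF (a + w) ∂(gaussianReal 0 v)
        = (∫⁻ w, (gaussianReal 0 1) (Set.Iic (a + w)) ∂(gaussianReal 0 v)).toReal := by
      rw [← integral_toReal hmono.measurable.aemeasurable
        (ae_of_all _ fun w => measure_lt_top _ _)]
      simp_rw [stdNormalCDF_eq_toReal]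
    have h2 : ∀ w : ℝ, (gaussianReal 0 1) (Set.Iic (a + w))
        = ∫⁻ t in Set.Iic a, gaussianPDF 0 1 (t + w) := by
      intro w
      rw [gaussianReal_apply 0 one_ne_zero]
      have hpre : (· + w) ⁻¹' (Set.Iic (a + w)) = Set.Iic a := by
        ext x
        simp [add_le_add_iff_right]
      have hrm : (volume.restrict (Set.Iic a)).map (· + w)
          = volume.restrict (Set.Iic (a + w)) := by
        conv_lhs => rw [← hpre]
        rw [← Measure.restrict_map (measurable_add_const w) measurableSet_Iic,
          map_add_right_eq_self volume w]
      rw [← hrm, lintegral_map (measurable_gaussianPDF 0 1) (measurable_add_const w)]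
    have hg1 : Measurable fun p : ℝ × ℝ => gaussianPDF 0 1 (p.2 + p.1) :=
      (measurable_gaussianPDF 0 1).comp (measurable_snd.add measurable_fst)
    have hgv : Measurable fun p : ℝ × ℝ => gaussianPDF 0 v p.1 :=
      (measurable_gaussianPDF 0 v).comp measurable_fst
    have hinner : Measurable fun w => ∫⁻ t in Set.Iic a, gaussianPDF 0 1 (t + w) :=
      Measurable.lintegral_prod_right hg1
    have h3 : ∫⁻ w, (gaussianReal 0 1) (Set.Iic (a + w)) ∂(gaussianReal 0 v)
        = ∫⁻ t in Set.Iic a, ∫⁻ w, gaussianPDF 0 1 (t + w) * gaussianPDF 0 v w := by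
      simp_rw [h2]
      rw [gaussianReal_of_var_ne_zero 0 hv,
        lintegral_withDensity_eq_lintegral_mul _ (measurable_gaussianPDF 0 v) hinner]
      simp only [Pi.mul_apply]
      have hswap := lintegral_lintegral_swap (μ := (volume : Measure ℝ))
        (ν := volume.restrict (Set.Iic a))
        (f := fun w t => gaussianPDF 0 1 (t + w) * gaussianPDF 0 v w)
        (hg1.mul hgv).aemeasurable
      rw [← hswap]
      congr 1 with w
      have hne : gaussianPDF 0 v w ≠ ⊤ := ENNReal.ofReal_ne_top
      rw [mul_comm]
      simpa using (lintegral_mul_const' (gaussianPDF 0 v w) _ hne).symm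
    have h4 : ∫⁻ t in Set.Iic a, ∫⁻ w, gaussianPDF 0 1 (t + w) * gaussianPDF 0 v w
        = (gaussianReal 0 (1 + v)) (Set.Iic a) := by
      rw [gaussianReal_apply 0 (by simp)]
      exact setLIntegral_congr_fun measurableSet_Iic
        (fun t _ => lintegral_gaussianPDF_conv 1 v one_ne_zero hv t)
    rw [h1, h3, h4, gaussianReal_Iic_scale, ← stdNormalCDF_eq_toReal]

lemma integral_stdNormalCDF_gaussian' (v : ℝ≥0) (b a : ℝ) :
    ∫ w, stdNormalCDF (a + b * w) ∂(gaussianReal 0 v)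
      = stdNormalCDF (a / Real.sqrt (1 + b ^ 2 * (v : ℝ))) := by
  have hmap := gaussianReal_map_const_mul (μ := 0) (v := v) b
  have h1 : ∫ w, stdNormalCDF (a + b * w) ∂(gaussianReal 0 v)
      = ∫ u, stdNormalCDF (a + u) ∂((gaussianReal 0 v).map (b * ·)) := by
    have hm : Measurable fun u : ℝ => stdNormalCDF (a + u) :=
      measurable_stdNormalCDF.comp (measurable_const_add a)
    rw [integral_map (measurable_const_mul b).aemeasurable hm.aestronglyMeasurable]
  rw [h1, hmap, mul_zero, integral_stdNormalCDF_gaussian]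
  congr 2

/-- Two-dimensional instance of Theorem 1: with `X₁ ~ N(μ₁, σ₁²)`, `σ₁ > 0`,
`W ~ N(0, (1−ρ²)σ₂²)` independent of `X₁`, and
`X₂ = μ₂ + ρ (σ₂/σ₁)(X₁ − μ₁) + W` (so that `(X₁, X₂)` is bivariate Gaussian with
correlation `ρ`), for all `β₀ β₁ β₂` a.s.
`E[Φ(β₀ + β₁X₁ + β₂X₂)|σ(X₁)] = Φ((α₀ + α₁X₁)/√(1 + β₂²(1−ρ²)σ₂²))` where
`α₀ = β₀ + β₂μ₂ − β₂ρ(σ₂/σ₁)μ₁` and `α₁ = β₁ + β₂ρσ₂/σ₁`. -/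
theorem probit_condexp_bivariate {Ω : Type*} [MeasurableSpace Ω]
    (P : Measure Ω) [IsProbabilityMeasure P]
    (X₁ W : Ω → ℝ) (hX₁ : Measurable X₁) (hW : Measurable W)
    (μ₁ μ₂ σ₁ σ₂ ρ : ℝ) (hσ₁ : 0 < σ₁) (hσ₂ : 0 ≤ σ₂)
    (hρ : ρ ∈ Set.Icc (-1 : ℝ) 1)
    (v₁ : ℝ≥0) (hv₁ : (v₁ : ℝ) = σ₁ ^ 2)
    (hX₁dist : P.map X₁ = gaussianReal μ₁ v₁)
    (hindep : IndepFun X₁ W P)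
    (vW : ℝ≥0) (hvW : (vW : ℝ) = (1 - ρ ^ 2) * σ₂ ^ 2) (hvWpos : 0 < vW)
    (hWdist : P.map W = gaussianReal 0 vW)
    (X₂ : Ω → ℝ) (hX₂ : ∀ ω, X₂ ω = μ₂ + ρ * (σ₂ / σ₁) * (X₁ ω - μ₁) + W ω)
    (β₀ β₁ β₂ : ℝ) :
    ∀ᵐ ω ∂P,
      (P[fun ω => stdNormalCDF (β₀ + β₁ * X₁ ω + β₂ * X₂ ω) |
          MeasurableSpace.comap X₁ inferInstance]) ω =
        stdNormalCDF (((β₀ + β₂ * μ₂ - β₂ * ρ * (σ₂ / σ₁) * μ₁)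
            + (β₁ + β₂ * ρ * σ₂ / σ₁) * X₁ ω) /
          Real.sqrt (1 + β₂ ^ 2 * (1 - ρ ^ 2) * σ₂ ^ 2)) := by
  have hm : MeasurableSpace.comap X₁ inferInstance ≤ ‹MeasurableSpace Ω› := hX₁.comap_le
  set c₀ : ℝ := β₀ + β₂ * μ₂ - β₂ * ρ * (σ₂ / σ₁) * μ₁ with hc₀
  set c₁ : ℝ := β₁ + β₂ * ρ * σ₂ / σ₁ with hc₁
  set g : ℝ → ℝ := fun x => stdNormalCDF ((c₀ + c₁ * x) /
    Real.sqrt (1 + β₂ ^ 2 * (1 - ρ ^ 2) * σ₂ ^ 2)) with hg_def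
  set f : Ω → ℝ := fun ω => stdNormalCDF (β₀ + β₁ * X₁ ω + β₂ * X₂ ω) with hf_def
  set ν : Measure ℝ := gaussianReal 0 vW with hν
  set μX : Measure ℝ := gaussianReal μ₁ v₁ with hμX
  have hσ₁' : σ₁ ≠ 0 := ne_of_gt hσ₁
  have harg : ∀ ω, β₀ + β₁ * X₁ ω + β₂ * X₂ ω = c₀ + c₁ * X₁ ω + β₂ * W ω := by
    intro ω
    rw [hX₂ ω, hc₀, hc₁]
    field_simp
    ring
  have hX₂m : Measurable X₂ := by
    have : X₂ = fun ω => μ₂ + ρ * (σ₂ / σ₁) * (X₁ ω - μ₁) + W ω := funext hX₂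
    rw [this]; fun_prop
  have hgm : Measurable g := by
    apply measurable_stdNormalCDF.comp; fun_prop
  have hfm : Measurable f := by
    apply measurable_stdNormalCDF.comp; fun_prop
  have habs : ∀ t : ℝ, ‖stdNormalCDF t‖ ≤ 1 := fun t => by
    rw [Real.norm_eq_abs, abs_le]
    exact ⟨by linarith [stdNormalCDF_nonneg t], stdNormalCDF_le_one t⟩
  have hf_int : Integrable f P :=
    Integrable.mono' (integrable_const 1) hfm.aestronglyMeasurable
      (ae_of_all _ fun ω => habs _)
  have hgX_int : Integrable (fun ω => g (X₁ ω)) P :=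
    Integrable.mono' (integrable_const 1) (hgm.comp hX₁).aestronglyMeasurable
      (ae_of_all _ fun ω => habs _)
  have hgx : ∀ x, ∫ w, stdNormalCDF (c₀ + c₁ * x + β₂ * w) ∂ν = g x := by
    intro x
    rw [hν, integral_stdNormalCDF_gaussian' vW β₂ (c₀ + c₁ * x), hg_def]
    rw [hvW, ← mul_assoc]
  have hprod : P.map (fun ω => (X₁ ω, W ω)) = μX.prod ν := by
    rw [← hX₁dist, ← hWdist]
    exact (indepFun_iff_map_prod_eq_prod_map_map hX₁.aemeasurable hW.aemeasurable).mp hindep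
  -- the structural set-integral identity
  have hseteq : ∀ s, MeasurableSet[MeasurableSpace.comap X₁ inferInstance] s → P s < ∞ →
      ∫ ω in s, g (X₁ ω) ∂P = ∫ ω in s, f ω ∂P := by
    intro s hs _
    obtain ⟨A, hA, rfl⟩ := hs
    set F : ℝ × ℝ → ℝ := fun p =>
      (A ×ˢ (Set.univ : Set ℝ)).indicator
        (fun p => stdNormalCDF (c₀ + c₁ * p.1 + β₂ * p.2)) p with hF_def
    have hFm : Measurable F := by
      apply Measurable.indicator ?_ (hA.prod MeasurableSet.univ)
      apply measurable_stdNormalCDF.comp; fun_prop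
    have hFbd : ∀ p, ‖F p‖ ≤ 1 := by
      intro p
      rw [hF_def]
      by_cases hp : p ∈ A ×ˢ (Set.univ : Set ℝ)
      · simp only [Set.indicator_of_mem hp]; exact habs _
      · simp [Set.indicator_of_notMem hp]
    have hFint : Integrable F (μX.prod ν) :=
      Integrable.mono' (integrable_const 1) hFm.aestronglyMeasurable
        (ae_of_all _ hFbd)
    have step1 : ∫ ω in X₁ ⁻¹' A, f ω ∂P = ∫ ω, F (X₁ ω, W ω) ∂P := by
      rw [← integral_indicator (hX₁ hA)]
      refine integral_congr_ae (ae_of_all _ fun ω => ?_)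
      by_cases hω : X₁ ω ∈ A
      · rw [Set.indicator_of_mem (Set.mem_preimage.mpr hω)]
        simp only [hF_def, Set.indicator_of_mem (show (X₁ ω, W ω) ∈ A ×ˢ (Set.univ : Set ℝ) from ⟨hω, Set.mem_univ _⟩),
          hf_def]
        rw [harg ω]
      · rw [Set.indicator_of_notMem (fun h => hω (Set.mem_preimage.mp h))]
        simp only [hF_def,
          Set.indicator_of_notMem (fun h : (X₁ ω, W ω) ∈ A ×ˢ Set.univ => hω h.1)]
    have step2 : ∫ ω, F (X₁ ω, W ω) ∂P = ∫ p, F p ∂(μX.prod ν) := by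
      rw [← hprod, integral_map (hX₁.prodMk hW).aemeasurable hFm.aestronglyMeasurable]
    have step4 : ∀ x, ∫ w, F (x, w) ∂ν = A.indicator g x := by
      intro x
      by_cases hx : x ∈ A
      · have heq : ∀ w, F (x, w) = stdNormalCDF (c₀ + c₁ * x + β₂ * w) := fun w => by
          simp only [hF_def, Set.indicator_of_mem (show ((x, w) : ℝ × ℝ) ∈ A ×ˢ (Set.univ : Set ℝ) from ⟨hx, Set.mem_univ _⟩)]
        simp_rw [heq]
        rw [hgx x, Set.indicator_of_mem hx]
      · have heq : ∀ w, F (x, w) = 0 := fun w => by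
          simp only [hF_def,
            Set.indicator_of_notMem (fun h : ((x, w) : ℝ × ℝ) ∈ A ×ˢ Set.univ => hx h.1)]
        simp_rw [heq]
        rw [integral_zero, Set.indicator_of_notMem hx]
    have step5 : ∫ ω in X₁ ⁻¹' A, g (X₁ ω) ∂P = ∫ x, A.indicator g x ∂μX := by
      rw [← integral_indicator (hX₁ hA)]
      have : ∀ ω, (X₁ ⁻¹' A).indicator (fun ω => g (X₁ ω)) ω = A.indicator g (X₁ ω) := by
        intro ω
        by_cases hω : X₁ ω ∈ A
        · rw [Set.indicator_of_mem (Set.mem_preimage.mpr hω), Set.indicator_of_mem hω]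
        · rw [Set.indicator_of_notMem (fun h => hω (Set.mem_preimage.mp h)),
            Set.indicator_of_notMem hω]
      simp_rw [this]
      rw [← hX₁dist, ← hμX] at *
      rw [← integral_map hX₁.aemeasurable (hgm.indicator hA).aestronglyMeasurable]
    rw [step1, step2, step5, integral_prod _ hFint]
    refine (integral_congr_ae (ae_of_all _ fun x => ?_)).symm
    exact step4 x
  have hmeas' : AEStronglyMeasurable[MeasurableSpace.comap X₁ inferInstance] (fun ω => g (X₁ ω)) P := by
    have hX₁m : Measurable[MeasurableSpace.comap X₁ inferInstance] X₁ := measurable_iff_comap_le.mpr le_rfl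
    exact ((hgm.comp hX₁m).stronglyMeasurable).aestronglyMeasurable
  have key : (fun ω => g (X₁ ω)) =ᵐ[P] P[f | MeasurableSpace.comap X₁ inferInstance] :=
    ae_eq_condExp_of_forall_setIntegral_eq hm hf_int
      (fun s _ _ => hgX_int.integrableOn) hseteq hmeas'
  filter_upwards [key] with ω h
  exact h.symm
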